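/- Let h > 0, ν > 0, let k be a nonzero integer, and let s ∈ ℂ with s ≠ 0. Let ξ be a positive real satisfying (4/h²)·sinh²(ξh/2) = k², and let γ ∈ ℂ satisfy Re(γ) > 0 and (4/h²)·sinh²(γh/2) = s/ν + k². Let C_p ∈ ℂ, and define U_j = −(i k C_p/s)·(exp(−ξ j h) − exp(−γ j h)) and P_j = C_p·exp(−ξ j h). Then D₊P_0 + ν i k·D₊U_0 = (C_p/h)·[(exp(−ξh) − 1) + (ν k²/s)·(exp(−ξh) − exp(−γh))]. In particular, the discrete pressure boundary condition D₊P_0 + ν i k·D₊U_0 = 0 holds if and only if C_p·[(exp(−ξh) − 1) + (ν k²/s)·(exp(−ξh) − exp(−γh))] = 0. -/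

import Mathlib

open Complex

/-- The discrete curl-curl pressure boundary condition reduces to the coefficient
equation `C_p · q(s) = 0`. -/
theorem stmt_2 (h ν : ℝ) (hh : 0 < h) (hν : 0 < ν)
    (k : ℤ) (hk : k ≠ 0) (s : ℂ) (hs : s ≠ 0)
    (ξ : ℝ) (hξpos : 0 < ξ)
    (hξ : (4 / h ^ 2) * (Real.sinh (ξ * h / 2)) ^ 2 = (k : ℝ) ^ 2)
    (γ : ℂ) (hγre : 0 < γ.re)
    (hγ : (4 / (h : ℂ) ^ 2) * (Complex.sinh (γ * (h : ℂ) / 2)) ^ 2 = s / (ν : ℂ) + (k : ℂ) ^ 2)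
    (Cp : ℂ) (U P : ℕ → ℂ)
    (hU : ∀ j : ℕ, U j = -(Complex.I * (k : ℂ) * Cp / s) *
      (Complex.exp (-(ξ : ℂ) * (j : ℂ) * (h : ℂ)) - Complex.exp (-γ * (j : ℂ) * (h : ℂ))))
    (hP : ∀ j : ℕ, P j = Cp * Complex.exp (-(ξ : ℂ) * (j : ℂ) * (h : ℂ))) :
    ((P 1 - P 0) / (h : ℂ) + (ν : ℂ) * Complex.I * (k : ℂ) * ((U 1 - U 0) / (h : ℂ))
        = (Cp / (h : ℂ)) * ((Complex.exp (-(ξ : ℂ) * (h : ℂ)) - 1)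
          + ((ν : ℂ) * (k : ℂ) ^ 2 / s)
            * (Complex.exp (-(ξ : ℂ) * (h : ℂ)) - Complex.exp (-γ * (h : ℂ))))) ∧
    ((P 1 - P 0) / (h : ℂ) + (ν : ℂ) * Complex.I * (k : ℂ) * ((U 1 - U 0) / (h : ℂ)) = 0 ↔
      Cp * ((Complex.exp (-(ξ : ℂ) * (h : ℂ)) - 1)
        + ((ν : ℂ) * (k : ℂ) ^ 2 / s)
          * (Complex.exp (-(ξ : ℂ) * (h : ℂ)) - Complex.exp (-γ * (h : ℂ)))) = 0) := by
  have hh' : (h : ℂ) ≠ 0 := by exact_mod_cast hh.ne'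
  have key : (P 1 - P 0) / (h : ℂ) + (ν : ℂ) * Complex.I * (k : ℂ) * ((U 1 - U 0) / (h : ℂ))
      = (Cp / (h : ℂ)) * ((Complex.exp (-(ξ : ℂ) * (h : ℂ)) - 1)
        + ((ν : ℂ) * (k : ℂ) ^ 2 / s)
          * (Complex.exp (-(ξ : ℂ) * (h : ℂ)) - Complex.exp (-γ * (h : ℂ)))) := by
    rw [hU 0, hU 1, hP 0, hP 1]
    push_cast
    have hI : Complex.I * Complex.I = -1 := Complex.I_mul_I
    field_simp
    ring_nf
    rw [Complex.I_sq]
    ring_nf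
    rw [Complex.exp_zero]
    ring
  refine ⟨key, ?_⟩
  rw [key]
  rw [div_mul_eq_mul_div, div_eq_zero_iff]
  simp [hh']
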